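/- Let ρ ≥ 1 be a real number such that MST(Q) ≤ ρ · SMT(Q) for every nonempty finite set Q ⊆ ℝ² (i.e., ρ is an upper bound on the Steiner ratio in the plane). Let T_P be a Euclidean minimum spanning tree of P (assume P nonempty), and let G' be a red-blue-purple spanning graph of (R,B,P) of minimum weight among all RBP spanning graphs whose set of purple edges is exactly the edge set of T_P. Then the weight of G' is at most (ρ/2 + 1) times the weight of a minimum red-blue-purple spanning graph of (R,B,P). -/

import Mathlib

open scoped Classical

noncomputable section

/-- The Euclidean plane. -/
abbrev Pt : Type := EuclideanSpace ℝ (Fin 2)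

/-- The simple graph on the plane whose edge set is the finite set `E`. -/
def graphOf (E : Finset (Sym2 Pt)) : SimpleGraph Pt where
  Adj x y := x ≠ y ∧ s(x, y) ∈ E
  symm := ⟨fun x y ⟨hne, he⟩ => ⟨hne.symm, by rwa [Sym2.eq_swap]⟩⟩
  loopless := ⟨fun x ⟨hne, _⟩ => hne rfl⟩

/-- Euclidean length of an edge. -/
def edgeLen (e : Sym2 Pt) : ℝ :=
  Sym2.lift ⟨fun x y => dist x y, fun _ _ => dist_comm _ _⟩ e

/-- Total Euclidean length of a finite edge set. -/
def weight (E : Finset (Sym2 Pt)) : ℝ := ∑ e ∈ E, edgeLen e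

/-- `E` is the edge set of a red-blue-purple spanning graph of `(R, B, P)`. -/
def IsRBP (R B P : Finset Pt) (E : Finset (Sym2 Pt)) : Prop :=
  (∀ e ∈ E, ¬ e.IsDiag) ∧
  (∀ e ∈ E, ∀ x ∈ e, x ∈ R ∪ B ∪ P) ∧
  ((graphOf E).induce (↑(R ∪ P) : Set Pt)).Connected ∧
  ((graphOf E).induce (↑(B ∪ P) : Set Pt)).Connected

/-- `E` is the edge set of a minimum red-blue-purple spanning graph of `(R, B, P)`. -/
def IsMinRBP (R B P : Finset Pt) (E : Finset (Sym2 Pt)) : Prop :=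
  IsRBP R B P E ∧ ∀ E', IsRBP R B P E' → weight E ≤ weight E'

/-- `T` is the edge set of a spanning tree on the point set `Q`. -/
def IsSpanningTreeOn (Q : Finset Pt) (T : Finset (Sym2 Pt)) : Prop :=
  (∀ e ∈ T, ¬ e.IsDiag) ∧
  (∀ e ∈ T, ∀ x ∈ e, x ∈ Q) ∧
  ((graphOf T).induce (↑Q : Set Pt)).IsTree

/-- `T` is the edge set of a Euclidean minimum spanning tree of `Q`. -/
def IsEMST (Q : Finset Pt) (T : Finset (Sym2 Pt)) : Prop :=
  IsSpanningTreeOn Q T ∧ ∀ T', IsSpanningTreeOn Q T' → weight T ≤ weight T'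

/-- `MST(Q)`: the minimum total edge length of a spanning tree on `Q`. -/
def mstLen (Q : Finset Pt) : ℝ :=
  sInf (weight '' {T | IsSpanningTreeOn Q T})

/-- `SMT(Q)`: the Steiner minimal tree length of `Q`,
`inf { MST(Q') : Q' finite, Q ⊆ Q' }`. -/
def smtLen (Q : Finset Pt) : ℝ :=
  sInf {m : ℝ | ∃ Q' : Finset Pt, Q ⊆ Q' ∧ m = mstLen Q'}


lemma edgeLen_mk (a b : Pt) : edgeLen s(a,b) = dist a b := rfl

lemma edgeLen_nonneg (e : Sym2 Pt) : 0 ≤ edgeLen e := by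
  induction e using Sym2.ind with
  | _ a b => rw [edgeLen_mk]; exact dist_nonneg

lemma weight_nonneg (E : Finset (Sym2 Pt)) : 0 ≤ weight E :=
  Finset.sum_nonneg fun e _ => edgeLen_nonneg e

lemma weight_mono {A B : Finset (Sym2 Pt)} (h : A ⊆ B) : weight A ≤ weight B :=
  Finset.sum_le_sum_of_subset_of_nonneg h fun e _ _ => edgeLen_nonneg e

-- reachability transfer
lemma reach_mono {V : Type*} {G H : SimpleGraph V}
    (h : ∀ a b, G.Adj a b → H.Reachable a b) {a b : V} (hr : G.Reachable a b) :
    H.Reachable a b := by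
  obtain ⟨w⟩ := hr
  induction w with
  | nil => exact SimpleGraph.Reachable.refl _
  | cons hadj _ ih => exact (h _ _ hadj).trans ih

lemma connected_transfer {V : Type*} {G H : SimpleGraph V}
    (h : ∀ a b, G.Adj a b → H.Reachable a b) (hG : G.Connected) : H.Connected := by
  have := hG.nonempty
  exact (SimpleGraph.connected_iff _).mpr ⟨fun a b => reach_mono h (hG.preconnected a b), this⟩

lemma reachable_eq_of_no_adj {V : Type*} {G : SimpleGraph V}
    (hadj : ∀ a b : V, ¬ G.Adj a b) {a b : V} (hr : G.Reachable a b) : a = b := by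
  obtain ⟨w⟩ := hr
  cases w with
  | nil => rfl
  | cons h _ => exact absurd h (hadj _ _)

lemma mem_of_mem_sym2 {a b x : Pt} (hx : x ∈ s(a,b)) : x = a ∨ x = b := Sym2.mem_iff.mp hx

lemma sym2_exists_mem (e : Sym2 Pt) : ∃ x, x ∈ e := by
  induction e using Sym2.ind with
  | _ a b => exact ⟨a, Sym2.mem_mk_left a b⟩

/-! ### Tour cost machinery -/

def cost : List Pt → ℝ
  | [] => 0
  | [_] => 0
  | a :: b :: t => dist a b + cost (b :: t)

lemma cost_nil : cost [] = 0 := rfl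
lemma cost_single (a : Pt) : cost [a] = 0 := rfl
lemma cost_cons_cons (a b : Pt) (t : List Pt) :
    cost (a :: b :: t) = dist a b + cost (b :: t) := rfl

lemma cost_nonneg (l : List Pt) : 0 ≤ cost l := by
  match l with
  | [] => simp [cost_nil]
  | [a] => simp [cost_single]
  | a :: b :: t =>
    have := cost_nonneg (b :: t)
    rw [cost_cons_cons]
    positivity

lemma cost_cons_le (a : Pt) (t : List Pt) : cost t ≤ cost (a :: t) := by
  match t with
  | [] => simp [cost_nil, cost_single]
  | b :: t' =>
    rw [cost_cons_cons]
    have := dist_nonneg (x := a) (y := b)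
    linarith

lemma cost_cons_skip (x a : Pt) (s : List Pt) : cost (x :: s) ≤ cost (x :: a :: s) := by
  match s with
  | [] =>
    simp [cost_single, cost_cons_cons, cost_nil]
  | c :: t =>
    rw [cost_cons_cons, cost_cons_cons, cost_cons_cons]
    have htri := dist_triangle x a c
    linarith

lemma cost_sublist_cons : ∀ {t t' : List Pt}, List.Sublist t' t → ∀ x, cost (x :: t') ≤ cost (x :: t) := by
  intro t
  induction t with
  | nil => intro t' h x; cases List.sublist_nil.mp h; exact le_refl _
  | cons a s ih =>
    intro t' h x
    cases h with
    | cons _ h' =>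
      calc cost (x :: t') ≤ cost (x :: s) := ih h' x
        _ ≤ cost (x :: a :: s) := cost_cons_skip x a s
    | cons_cons _ h' =>
      rw [cost_cons_cons, cost_cons_cons]
      exact add_le_add_right (ih h' a) _

lemma cost_sublist : ∀ {t t' : List Pt}, List.Sublist t' t → cost t' ≤ cost t := by
  intro t
  induction t with
  | nil => intro t' h; cases List.sublist_nil.mp h; exact le_refl _
  | cons a s ih =>
    intro t' h
    cases h with
    | cons _ h' => exact (ih h').trans (cost_cons_le a s)
    | cons_cons _ h' => exact cost_sublist_cons h' a

lemma cost_append_cons : ∀ (xs : List Pt) (a : Pt) (ys : List Pt),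
    cost (xs ++ a :: ys) = cost (xs ++ [a]) + cost (a :: ys) := by
  intro xs
  induction xs with
  | nil => intro a ys; simp [cost_single]
  | cons b t ih =>
    intro a ys
    match t with
    | [] => simp [cost_cons_cons, cost_single, cost_nil]
    | c :: t' =>
      have h1 : (b :: c :: t') ++ a :: ys = b :: c :: (t' ++ a :: ys) := by simp
      have h2 : (b :: c :: t') ++ [a] = b :: c :: (t' ++ [a]) := by simp
      rw [h1, h2, cost_cons_cons]
      have := ih a ys
      have h3 : (c :: t') ++ a :: ys = c :: (t' ++ a :: ys) := by simp
      have h4 : (c :: t') ++ [a] = c :: (t' ++ [a]) := by simp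
      rw [h3, h4] at this
      rw [this, cost_cons_cons]
      ring

lemma cost_append_single : ∀ (xs : List Pt) (hxs : xs ≠ []) (b : Pt),
    cost (xs ++ [b]) = cost xs + dist (xs.getLast hxs) b := by
  intro xs
  induction xs with
  | nil => intro h; exact absurd rfl h
  | cons a t ih =>
    intro _ b
    match t with
    | [] => simp [cost_cons_cons, cost_single, cost_nil]
    | c :: t' =>
      have h1 : cost ((a :: c :: t') ++ [b]) = dist a c + cost ((c :: t') ++ [b]) := by
        have : (a :: c :: t') ++ [b] = a :: c :: (t' ++ [b]) := by simp
        rw [this, cost_cons_cons]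
        congr 1
      rw [h1, ih (by simp) b, cost_cons_cons]
      have : (a :: c :: t').getLast (by simp) = (c :: t').getLast (by simp) := by
        simp [List.getLast_cons]
      rw [this]
      ring

lemma head?_append_cons (y : List Pt) (u : Pt) (z z' : List Pt) :
    (y ++ u :: z).head? = (y ++ u :: z').head? := by
  cases y <;> simp

lemma getLast?_append_cons (y y' : List Pt) (u : Pt) (z : List Pt) :
    (y ++ u :: z).getLast? = (y' ++ u :: z).getLast? := by
  rw [List.getLast?_append_cons, List.getLast?_append_cons]

lemma tour_splice (l1 l2 : List Pt) (a u v : Pt)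
    (h1h : l1.head? = some a) (h1l : l1.getLast? = some a) (hu : u ∈ l1)
    (h2h : l2.head? = some v) (h2l : l2.getLast? = some v) :
    ∃ l : List Pt, l.head? = some a ∧ l.getLast? = some a ∧
      (∀ x, x ∈ l ↔ x ∈ l1 ∨ x ∈ l2) ∧ cost l = cost l1 + cost l2 + 2 * dist u v := by
  obtain ⟨y, z, rfl⟩ := List.append_of_mem hu
  refine ⟨y ++ u :: (l2 ++ u :: z), ?_, ?_, ?_, ?_⟩
  · rw [head?_append_cons y u (l2 ++ u :: z) z]; exact h1h
  · have h1 : (y ++ u :: z).getLast? = (u :: z).getLast? := List.getLast?_append_cons ..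
    rw [h1] at h1l
    rw [List.getLast?_append_cons]
    have e : u :: (l2 ++ u :: z) = (u :: l2) ++ u :: z := by simp
    rw [e, List.getLast?_append_cons]
    exact h1l
  · intro x; simp only [List.mem_append, List.mem_cons]; tauto
  · -- cost computation
    obtain ⟨w, rfl⟩ : ∃ w, l2 = v :: w := by
      cases l2 with
      | nil => simp at h2h
      | cons b w => simp at h2h; exact ⟨w, by rw [h2h]⟩
    -- l = y ++ u :: ((v :: w) ++ u :: z)
    rw [cost_append_cons y u ((v :: w) ++ u :: z)]
    have e1 : cost (u :: ((v :: w) ++ u :: z)) = cost ((u :: v :: w) ++ u :: z) := by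
      congr 1
    rw [e1, cost_append_cons (u :: v :: w) u z]
    have e2 : cost ((u :: v :: w) ++ [u]) = dist u v + cost ((v :: w) ++ [u]) := by
      have : (u :: v :: w) ++ [u] = u :: v :: (w ++ [u]) := by simp
      rw [this, cost_cons_cons]
      congr 1
    have hvw : (v :: w).getLast (by simp) = v := by
      have := h2l
      rw [List.getLast?_eq_getLast (l := v :: w) (by simp)] at this
      exact Option.some_injective _ this
    rw [e2, cost_append_single (v :: w) (by simp) u, hvw]
    rw [cost_append_cons y u z]
    rw [dist_comm v u]
    ring

lemma graphOf_adj (E : Finset (Sym2 Pt)) (x y : Pt) :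
    (graphOf E).Adj x y ↔ x ≠ y ∧ s(x, y) ∈ E := Iff.rfl

lemma induce_graphOf_adj (E : Finset (Sym2 Pt)) (Q : Finset Pt) (a b : (↑Q : Set Pt)) :
    ((graphOf E).induce (↑Q : Set Pt)).Adj a b ↔ (a : Pt) ≠ (b : Pt) ∧ s((a : Pt), (b : Pt)) ∈ E := by
  simp only [graphOf, SimpleGraph.comap_adj, Function.Embedding.coe_subtype]

lemma induce_filter_eq (F : Finset (Sym2 Pt)) (Q : Finset Pt) (p : Sym2 Pt → Prop) [DecidablePred p]
    (hp : ∀ x y : Pt, x ∈ Q → y ∈ Q → x ≠ y → s(x, y) ∈ F → p s(x, y)) :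
    (graphOf (F.filter p)).induce (↑Q : Set Pt) = (graphOf F).induce (↑Q : Set Pt) := by
  ext a b
  rw [induce_graphOf_adj, induce_graphOf_adj, Finset.mem_filter]
  constructor
  · rintro ⟨hne, he, _⟩; exact ⟨hne, he⟩
  · rintro ⟨hne, he⟩
    exact ⟨hne, he, hp _ _ (Finset.mem_coe.mp a.2) (Finset.mem_coe.mp b.2) hne he⟩

lemma sym2_subtype_ne {Q : Set Pt} (a b c d : Q)
    (h : s((a : Pt), (b : Pt)) ≠ s((c : Pt), (d : Pt))) : s(a, b) ≠ s(c, d) := by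
  intro heq
  apply h
  rcases Sym2.eq_iff.mp heq with ⟨h1, h2⟩ | ⟨h1, h2⟩
  · rw [h1, h2]
  · rw [h1, h2, Sym2.eq_swap]

lemma exists_spanning_tree (Q : Finset Pt) (F : Finset (Sym2 Pt))
    (hconn : ((graphOf F).induce (↑Q : Set Pt)).Connected) :
    ∃ T, IsSpanningTreeOn Q T ∧ weight T ≤ weight F := by
  classical
  set F₀ := F.filter (fun e => ¬ e.IsDiag ∧ ∀ x ∈ e, x ∈ Q) with hF₀def
  have heq := induce_filter_eq F Q (fun e => ¬ e.IsDiag ∧ ∀ x ∈ e, x ∈ Q) (by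
    intro x y hx hy hne he
    refine ⟨?_, ?_⟩
    · rw [Sym2.isDiag_iff_proj_eq]; exact hne
    · intro z hz
      rcases mem_of_mem_sym2 hz with rfl | rfl
      · exact hx
      · exact hy)
  have hF₀conn : ((graphOf F₀).induce (↑Q : Set Pt)).Connected := by
    rw [hF₀def, heq]; exact hconn
  set 𝒮 : Finset (Finset (Sym2 Pt)) :=
    F₀.powerset.filter (fun T => ((graphOf T).induce (↑Q : Set Pt)).Connected) with h𝒮def
  have h𝒮ne : 𝒮.Nonempty :=
    ⟨F₀, by rw [h𝒮def, Finset.mem_filter, Finset.mem_powerset]; exact ⟨subset_rfl, hF₀conn⟩⟩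
  obtain ⟨T, hT𝒮, hTmin⟩ := 𝒮.exists_min_image Finset.card h𝒮ne
  rw [h𝒮def, Finset.mem_filter, Finset.mem_powerset] at hT𝒮
  obtain ⟨hTsub, hTconn⟩ := hT𝒮
  have hTF : T ⊆ F := hTsub.trans (Finset.filter_subset _ _)
  refine ⟨T, ⟨?_, ?_, ?_⟩, weight_mono hTF⟩
  · intro e he; exact ((Finset.mem_filter.mp (hTsub he)).2).1
  · intro e he; exact ((Finset.mem_filter.mp (hTsub he)).2).2
  · refine ⟨hTconn, ?_⟩
    rw [SimpleGraph.isAcyclic_iff_forall_edge_isBridge]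
    intro e he
    induction e using Sym2.ind with
    | _ a b =>
      rw [SimpleGraph.mem_edgeSet] at he
      rw [SimpleGraph.isBridge_iff]
      refine fun hreach => ?_
      -- reachability of a b after deleting the edge, in the induced graph
      have hab : s((a : Pt), (b : Pt)) ∈ T := (induce_graphOf_adj T Q a b).mp he |>.2
      set T' := T.erase s((a : Pt), (b : Pt)) with hT'def
      have hreach' : ((graphOf T').induce (↑Q : Set Pt)).Reachable a b := by
        refine reach_mono ?_ hreach
        intro c d hcd
        rw [SimpleGraph.deleteEdges_adj] at hcd
        obtain ⟨hcd1, hcd2⟩ := hcd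
        rw [induce_graphOf_adj] at hcd1
        have hne : c ≠ d := fun h => hcd1.1 (by rw [h])
        have hnes : s(c, d) ≠ s(a, b) := by
          intro h
          exact hcd2 (Set.mem_singleton_iff.mpr h)
        have : s((c : Pt), (d : Pt)) ≠ s((a : Pt), (b : Pt)) := by
          intro h
          apply hnes
          rcases Sym2.eq_iff.mp h with ⟨h1, h2⟩ | ⟨h1, h2⟩
          · rw [Subtype.ext h1, Subtype.ext h2]
          · rw [Subtype.ext h1, Subtype.ext h2, Sym2.eq_swap]
        apply SimpleGraph.Adj.reachable
        rw [induce_graphOf_adj]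
        exact ⟨hcd1.1, Finset.mem_erase.mpr ⟨this, hcd1.2⟩⟩
      have hT'conn : ((graphOf T').induce (↑Q : Set Pt)).Connected := by
        refine connected_transfer ?_ hTconn
        intro c d hcd
        rw [induce_graphOf_adj] at hcd
        by_cases hce : s((c : Pt), (d : Pt)) = s((a : Pt), (b : Pt))
        · rcases Sym2.eq_iff.mp hce with ⟨h1, h2⟩ | ⟨h1, h2⟩
          · rw [show c = a from Subtype.ext h1, show d = b from Subtype.ext h2]
            exact hreach'
          · rw [show c = b from Subtype.ext h1, show d = a from Subtype.ext h2]
            exact hreach'.symm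
        · apply SimpleGraph.Adj.reachable
          rw [induce_graphOf_adj]
          exact ⟨hcd.1, Finset.mem_erase.mpr ⟨hce, hcd.2⟩⟩
      have hT'𝒮 : T' ∈ 𝒮 := by
        rw [h𝒮def, Finset.mem_filter, Finset.mem_powerset]
        exact ⟨(Finset.erase_subset _ _).trans hTsub, hT'conn⟩
      have := hTmin T' hT'𝒮
      have hlt : T'.card < T.card := Finset.card_erase_lt_of_mem hab
      omega

lemma mstLen_nonneg (Q : Finset Pt) : 0 ≤ mstLen Q := by
  apply Real.sInf_nonneg
  rintro x ⟨T, _, rfl⟩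
  exact weight_nonneg T

lemma mstLen_le {Q : Finset Pt} {T : Finset (Sym2 Pt)} (h : IsSpanningTreeOn Q T) :
    mstLen Q ≤ weight T :=
  csInf_le ⟨0, fun x ⟨T', _, hx⟩ => hx ▸ weight_nonneg T'⟩ ⟨T, h, rfl⟩

lemma smtLen_nonneg (Q : Finset Pt) : 0 ≤ smtLen Q := by
  apply Real.sInf_nonneg
  rintro x ⟨Q', _, rfl⟩
  exact mstLen_nonneg Q'

lemma smtLen_le {P Q' : Finset Pt} (h : P ⊆ Q') : smtLen P ≤ mstLen Q' :=
  csInf_le ⟨0, fun x ⟨Q'', _, hx⟩ => hx ▸ mstLen_nonneg Q''⟩ ⟨Q', h, rfl⟩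

/-- The complete graph edge set on `Q`. -/
lemma complete_connected (Q : Finset Pt) (hQ : Q.Nonempty) :
    ((graphOf ((Q ×ˢ Q).image (fun p => s(p.1, p.2)))).induce (↑Q : Set Pt)).Connected := by
  have : Nonempty (↑Q : Set Pt) := ⟨⟨hQ.choose, hQ.choose_spec⟩⟩
  refine (SimpleGraph.connected_iff _).mpr ⟨fun a b => ?_, this⟩
  by_cases hab : (a : Pt) = (b : Pt)
  · rw [show a = b from Subtype.ext hab]
  · apply SimpleGraph.Adj.reachable
    rw [induce_graphOf_adj]
    refine ⟨hab, Finset.mem_image.mpr ⟨(a, b), ?_, rfl⟩⟩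
    exact Finset.mem_product.mpr ⟨Finset.mem_coe.mp a.2, Finset.mem_coe.mp b.2⟩

lemma exists_spanning_tree_of_nonempty (Q : Finset Pt) (hQ : Q.Nonempty) :
    ∃ T, IsSpanningTreeOn Q T := by
  obtain ⟨T, hT, _⟩ := exists_spanning_tree Q _ (complete_connected Q hQ)
  exact ⟨T, hT⟩

section Tour

lemma walk_alt (F : Finset (Sym2 Pt)) (Q : Finset Pt) (u v : Pt)
    (hu : u ∈ (↑Q : Set Pt)) (hv : v ∈ (↑Q : Set Pt)) :
    ∀ (st en : (↑Q : Set Pt)) (_ : ((graphOf F).induce (↑Q : Set Pt)).Walk st en),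
      ((graphOf (F.erase s(u, v))).induce (↑Q : Set Pt)).Reachable st en ∨
      ((graphOf (F.erase s(u, v))).induce (↑Q : Set Pt)).Reachable st ⟨u, hu⟩ ∨
      ((graphOf (F.erase s(u, v))).induce (↑Q : Set Pt)).Reachable st ⟨v, hv⟩ := by
  intro st en w
  induction w with
  | nil => exact Or.inl (SimpleGraph.Reachable.refl _)
  | @cons c d _ h p ih =>
    by_cases hce : s((c : Pt), (d : Pt)) = s(u, v)
    · rcases Sym2.eq_iff.mp hce with ⟨h1, _⟩ | ⟨h1, _⟩
      · exact Or.inr (Or.inl (by rw [show c = ⟨u, hu⟩ from Subtype.ext h1]))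
      · exact Or.inr (Or.inr (by rw [show c = ⟨v, hv⟩ from Subtype.ext h1]))
    · have hadj : ((graphOf (F.erase s(u, v))).induce (↑Q : Set Pt)).Adj c d := by
        rw [induce_graphOf_adj] at h ⊢
        exact ⟨h.1, Finset.mem_erase.mpr ⟨hce, h.2⟩⟩
      rcases ih with h' | h' | h'
      · exact Or.inl (hadj.reachable.trans h')
      · exact Or.inr (Or.inl (hadj.reachable.trans h'))
      · exact Or.inr (Or.inr (hadj.reachable.trans h'))

lemma component_conn (F' : Finset (Sym2 Pt)) (Q Q1 : Finset Pt) (u : Pt)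
    (hu : u ∈ (↑Q : Set Pt))
    (hQ1 : ∀ x, x ∈ Q1 ↔ ∃ hx : x ∈ (↑Q : Set Pt),
      ((graphOf F').induce (↑Q : Set Pt)).Reachable ⟨x, hx⟩ ⟨u, hu⟩) :
    ((graphOf (F'.filter (fun e => ∀ x ∈ e, x ∈ Q1))).induce (↑Q1 : Set Pt)).Connected := by
  have hu1 : u ∈ Q1 := (hQ1 u).mpr ⟨hu, SimpleGraph.Reachable.refl _⟩
  have hu1' : u ∈ (↑Q1 : Set Pt) := Finset.mem_coe.mpr hu1
  set tgt := (graphOf (F'.filter (fun e => ∀ x ∈ e, x ∈ Q1))).induce (↑Q1 : Set Pt) with htgt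
  have key : ∀ (st en : (↑Q : Set Pt))
      (_ : ((graphOf F').induce (↑Q : Set Pt)).Walk st en)
      (hst : (st : Pt) ∈ Q1) (hen : (en : Pt) ∈ Q1),
      tgt.Reachable ⟨st, Finset.mem_coe.mpr hst⟩ ⟨en, Finset.mem_coe.mpr hen⟩ := by
    intro st en w
    induction w with
    | nil => intro _ _; exact SimpleGraph.Reachable.refl _
    | @cons c d e h p ih =>
      intro hst hen
      have hrenu : ((graphOf F').induce (↑Q : Set Pt)).Reachable e ⟨u, hu⟩ := by
        obtain ⟨hx, hr⟩ := (hQ1 (e : Pt)).mp hen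
        exact hr
      have hd1 : (d : Pt) ∈ Q1 := (hQ1 (d : Pt)).mpr ⟨d.2, SimpleGraph.Reachable.trans ⟨p⟩ hrenu⟩
      rw [induce_graphOf_adj] at h
      have hedge : s((c : Pt), (d : Pt)) ∈ F'.filter (fun e => ∀ x ∈ e, x ∈ Q1) := by
        rw [Finset.mem_filter]
        refine ⟨h.2, fun x hx => ?_⟩
        rcases mem_of_mem_sym2 hx with rfl | rfl
        · exact hst
        · exact hd1
      have hadj : tgt.Adj ⟨c, Finset.mem_coe.mpr hst⟩ ⟨d, Finset.mem_coe.mpr hd1⟩ := by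
        rw [htgt, induce_graphOf_adj]
        exact ⟨h.1, hedge⟩
      exact hadj.reachable.trans (ih hd1 hen)
  have hne : Nonempty (↑Q1 : Set Pt) := ⟨⟨u, hu1'⟩⟩
  refine (SimpleGraph.connected_iff _).mpr ⟨fun a b => ?_, hne⟩
  obtain ⟨ha1, hra⟩ := (hQ1 a).mp (Finset.mem_coe.mp a.2)
  obtain ⟨hb1, hrb⟩ := (hQ1 b).mp (Finset.mem_coe.mp b.2)
  obtain ⟨wa⟩ := hra
  obtain ⟨wb⟩ := hrb.symm
  have h1 := key ⟨(a : Pt), ha1⟩ ⟨u, hu⟩ wa (Finset.mem_coe.mp a.2) hu1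
  have h2 := key ⟨u, hu⟩ ⟨(b : Pt), hb1⟩ wb hu1 (Finset.mem_coe.mp b.2)
  rw [show (⟨(a : Pt), _⟩ : (↑Q1 : Set Pt)) = a from Subtype.ext rfl] at h1
  rw [show (⟨(b : Pt), _⟩ : (↑Q1 : Set Pt)) = b from Subtype.ext rfl] at h2
  exact h1.trans h2

end Tour
lemma tour_of_empty (Q : Finset Pt)
    (hconn : ((graphOf (∅ : Finset (Sym2 Pt))).induce (↑Q : Set Pt)).Connected)
    (a : Pt) (ha : a ∈ Q) :
    ∃ l : List Pt, l.head? = some a ∧ l.getLast? = some a ∧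
      (∀ x, x ∈ l ↔ x ∈ Q) ∧ cost l ≤ 2 * weight (∅ : Finset (Sym2 Pt)) := by
  have hnoadj : ∀ c d : (↑Q : Set Pt), ¬ ((graphOf (∅ : Finset (Sym2 Pt))).induce (↑Q : Set Pt)).Adj c d := by
    intro c d hcd
    rw [induce_graphOf_adj] at hcd
    exact absurd hcd.2 (Finset.notMem_empty _)
  refine ⟨[a], rfl, rfl, fun x => ?_, ?_⟩
  · constructor
    · intro hx
      rw [List.mem_singleton] at hx
      rw [hx]; exact ha
    · intro hx
      have := hconn.preconnected ⟨x, Finset.mem_coe.mpr hx⟩ ⟨a, Finset.mem_coe.mpr ha⟩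
      have heq := reachable_eq_of_no_adj hnoadj this
      rw [List.mem_singleton]
      exact congrArg Subtype.val heq
  · rw [cost_single]
    simp [weight]

lemma tour_exists : ∀ (n : ℕ) (F : Finset (Sym2 Pt)), F.card ≤ n →
    ∀ (Q : Finset Pt), (∀ e ∈ F, ∀ x ∈ e, x ∈ Q) →
    ((graphOf F).induce (↑Q : Set Pt)).Connected →
    ∀ a, a ∈ Q → ∃ l : List Pt, l.head? = some a ∧ l.getLast? = some a ∧
      (∀ x, x ∈ l ↔ x ∈ Q) ∧ cost l ≤ 2 * weight F := by
  intro n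
  induction n with
  | zero =>
    intro F hcard Q hmem hconn a ha
    rw [Finset.card_eq_zero.mp (Nat.le_zero.mp hcard)] at hconn ⊢
    exact tour_of_empty Q hconn a ha
  | succ n ih =>
    intro F hcard Q hmem hconn a ha
    by_cases hF : ∃ e ∈ F, ((graphOf (F.erase e)).induce (↑Q : Set Pt)).Connected
    · obtain ⟨e, he, hconn'⟩ := hF
      have hcard' : (F.erase e).card ≤ n := by
        rw [Finset.card_erase_of_mem he]; omega
      obtain ⟨l, h1, h2, h3, h4⟩ := ih (F.erase e) hcard' Q
        (fun e' he' => hmem e' (Finset.mem_of_mem_erase he')) hconn' a ha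
      refine ⟨l, h1, h2, h3, h4.trans ?_⟩
      have := weight_mono (Finset.erase_subset e F)
      linarith
    · rcases Finset.eq_empty_or_nonempty F with rfl | hFne
      · exact tour_of_empty Q hconn a ha
      obtain ⟨e, he⟩ := hFne
      revert he
      induction e using Sym2.ind with
      | _ u v =>
        intro he
        have hu : u ∈ Q := hmem _ he u (Sym2.mem_mk_left u v)
        have hv : v ∈ Q := hmem _ he v (Sym2.mem_mk_right u v)
        have hu' : u ∈ (↑Q : Set Pt) := Finset.mem_coe.mpr hu
        have hv' : v ∈ (↑Q : Set Pt) := Finset.mem_coe.mpr hv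
        set G' := (graphOf (F.erase s(u, v))).induce (↑Q : Set Pt) with hG'def
        have herased : ¬ G'.Connected := fun h => hF ⟨s(u, v), he, h⟩
        have hur : ¬ G'.Reachable ⟨u, hu'⟩ ⟨v, hv'⟩ := by
          intro hr
          apply herased
          refine connected_transfer ?_ hconn
          intro c d hcd
          rw [induce_graphOf_adj] at hcd
          by_cases hce : s((c : Pt), (d : Pt)) = s(u, v)
          · rcases Sym2.eq_iff.mp hce with ⟨h1, h2⟩ | ⟨h1, h2⟩
            · rw [show c = ⟨u, hu'⟩ from Subtype.ext h1, show d = ⟨v, hv'⟩ from Subtype.ext h2]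
              exact hr
            · rw [show c = ⟨v, hv'⟩ from Subtype.ext h1, show d = ⟨u, hu'⟩ from Subtype.ext h2]
              exact hr.symm
          · apply SimpleGraph.Adj.reachable
            rw [hG'def, induce_graphOf_adj]
            exact ⟨hcd.1, Finset.mem_erase.mpr ⟨hce, hcd.2⟩⟩
        set Q1 := Q.filter (fun x => ∃ hx : x ∈ (↑Q : Set Pt), G'.Reachable ⟨x, hx⟩ ⟨u, hu'⟩)
          with hQ1def
        set Q2 := Q.filter (fun x => ∃ hx : x ∈ (↑Q : Set Pt), G'.Reachable ⟨x, hx⟩ ⟨v, hv'⟩)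
          with hQ2def
        have hQ1 : ∀ x, x ∈ Q1 ↔ ∃ hx : x ∈ (↑Q : Set Pt), G'.Reachable ⟨x, hx⟩ ⟨u, hu'⟩ := by
          intro x
          rw [hQ1def, Finset.mem_filter]
          exact ⟨fun h => h.2, fun h => ⟨Finset.mem_coe.mp h.1, h⟩⟩
        have hQ2 : ∀ x, x ∈ Q2 ↔ ∃ hx : x ∈ (↑Q : Set Pt), G'.Reachable ⟨x, hx⟩ ⟨v, hv'⟩ := by
          intro x
          rw [hQ2def, Finset.mem_filter]
          exact ⟨fun h => h.2, fun h => ⟨Finset.mem_coe.mp h.1, h⟩⟩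
        have hdisj : ∀ x, ¬ (x ∈ Q1 ∧ x ∈ Q2) := by
          rintro x ⟨hx1, hx2⟩
          obtain ⟨hx, hr1⟩ := (hQ1 x).mp hx1
          obtain ⟨hx', hr2⟩ := (hQ2 x).mp hx2
          exact hur (hr1.symm.trans hr2)
        have hcover : ∀ x ∈ Q, x ∈ Q1 ∨ x ∈ Q2 := by
          intro x hx
          have hx' : x ∈ (↑Q : Set Pt) := Finset.mem_coe.mpr hx
          obtain ⟨w⟩ := hconn.preconnected ⟨x, hx'⟩ ⟨u, hu'⟩
          rcases walk_alt F Q u v hu' hv' ⟨x, hx'⟩ ⟨u, hu'⟩ w with h' | h' | h'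
          · exact Or.inl ((hQ1 x).mpr ⟨hx', h'⟩)
          · exact Or.inl ((hQ1 x).mpr ⟨hx', h'⟩)
          · exact Or.inr ((hQ2 x).mpr ⟨hx', h'⟩)
        have hu1 : u ∈ Q1 := (hQ1 u).mpr ⟨hu', SimpleGraph.Reachable.refl _⟩
        have hv2 : v ∈ Q2 := (hQ2 v).mpr ⟨hv', SimpleGraph.Reachable.refl _⟩
        set F1 := (F.erase s(u, v)).filter (fun e => ∀ x ∈ e, x ∈ Q1) with hF1def
        set F2 := (F.erase s(u, v)).filter (fun e => ∀ x ∈ e, x ∈ Q2) with hF2def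
        have hconn1 : ((graphOf F1).induce (↑Q1 : Set Pt)).Connected :=
          component_conn (F.erase s(u, v)) Q Q1 u hu' hQ1
        have hconn2 : ((graphOf F2).induce (↑Q2 : Set Pt)).Connected :=
          component_conn (F.erase s(u, v)) Q Q2 v hv' hQ2
        have hmem1 : ∀ e ∈ F1, ∀ x ∈ e, x ∈ Q1 := fun e he' =>
          (Finset.mem_filter.mp he').2
        have hmem2 : ∀ e ∈ F2, ∀ x ∈ e, x ∈ Q2 := fun e he' =>
          (Finset.mem_filter.mp he').2
        have hsub1 : F1 ⊆ F.erase s(u, v) := Finset.filter_subset _ _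
        have hsub2 : F2 ⊆ F.erase s(u, v) := Finset.filter_subset _ _
        have hcard1 : F1.card ≤ n := by
          have := Finset.card_le_card hsub1
          rw [Finset.card_erase_of_mem he] at this
          omega
        have hcard2 : F2.card ≤ n := by
          have := Finset.card_le_card hsub2
          rw [Finset.card_erase_of_mem he] at this
          omega
        -- weight split
        have hFdisj : Disjoint F1 F2 := by
          rw [Finset.disjoint_left]
          intro e' he1 he2
          obtain ⟨x, hx⟩ := sym2_exists_mem e'
          exact hdisj x ⟨hmem1 e' he1 x hx, hmem2 e' he2 x hx⟩
        have hwsplit : weight F1 + weight F2 + dist u v ≤ weight F := by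
          have h1 : weight F1 + weight F2 = weight (F1 ∪ F2) := by
            rw [weight, weight, weight, ← Finset.sum_union hFdisj]
          have h2 : weight (F1 ∪ F2) ≤ weight (F.erase s(u, v)) :=
            weight_mono (Finset.union_subset hsub1 hsub2)
          have h3 : weight (F.erase s(u, v)) + edgeLen s(u, v) = weight F :=
            Finset.sum_erase_add F _ he
          rw [edgeLen_mk] at h3
          linarith
        rcases hcover a ha with haQ | haQ
        · obtain ⟨l1, h1h, h1l, h1m, h1c⟩ := ih F1 hcard1 Q1 hmem1 hconn1 a haQ
          obtain ⟨l2, h2h, h2l, h2m, h2c⟩ := ih F2 hcard2 Q2 hmem2 hconn2 v hv2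
          obtain ⟨l, hlh, hll, hlm, hlc⟩ :=
            tour_splice l1 l2 a u v h1h h1l ((h1m u).mpr hu1) h2h h2l
          refine ⟨l, hlh, hll, fun x => ?_, ?_⟩
          · rw [hlm x, h1m x, h2m x]
            constructor
            · rintro (h | h)
              · exact Finset.mem_of_mem_filter _ h
              · exact Finset.mem_of_mem_filter _ h
            · exact hcover x
          · rw [hlc]; linarith
        · obtain ⟨l1, h1h, h1l, h1m, h1c⟩ := ih F1 hcard1 Q1 hmem1 hconn1 u hu1
          obtain ⟨l2, h2h, h2l, h2m, h2c⟩ := ih F2 hcard2 Q2 hmem2 hconn2 a haQ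
          obtain ⟨l, hlh, hll, hlm, hlc⟩ :=
            tour_splice l2 l1 a v u h2h h2l ((h2m v).mpr hv2) h1h h1l
          refine ⟨l, hlh, hll, fun x => ?_, ?_⟩
          · rw [hlm x, h1m x, h2m x]
            constructor
            · rintro (h | h)
              · exact Finset.mem_of_mem_filter _ h
              · exact Finset.mem_of_mem_filter _ h
            · exact (hcover x · |>.symm)
          · rw [hlc, dist_comm v u]; linarith

/-! ### Shortcutting a tour to a path -/

def edgesOfList : List Pt → List (Sym2 Pt)
  | [] => []
  | [_] => []
  | a :: b :: t => s(a, b) :: edgesOfList (b :: t)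

lemma cost_eq_sum_edges : ∀ l : List Pt, cost l = ((edgesOfList l).map edgeLen).sum := by
  intro l
  match l with
  | [] => simp [cost_nil, edgesOfList]
  | [a] => simp [cost_single, edgesOfList]
  | a :: b :: t =>
    have := cost_eq_sum_edges (b :: t)
    rw [cost_cons_cons, this]
    simp [edgesOfList, edgeLen_mk]

lemma edgesOfList_sub : ∀ (l : List Pt) (e : Sym2 Pt), e ∈ edgesOfList l → ∀ x ∈ e, x ∈ l := by
  intro l
  match l with
  | [] => simp [edgesOfList]
  | [a] => simp [edgesOfList]
  | a :: b :: t =>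
    intro e he x hx
    rw [edgesOfList, List.mem_cons] at he
    rcases he with rfl | he
    · rcases mem_of_mem_sym2 hx with rfl | rfl
      · exact List.mem_cons_self
      · exact List.mem_cons_of_mem _ List.mem_cons_self
    · exact List.mem_cons_of_mem _ (edgesOfList_sub (b :: t) e he x hx)

lemma weight_toFinset_le : ∀ L : List (Sym2 Pt), weight L.toFinset ≤ (L.map edgeLen).sum := by
  intro L
  induction L with
  | nil => simp [weight]
  | cons e L ih =>
    rw [List.toFinset_cons, List.map_cons, List.sum_cons]
    by_cases heL : e ∈ L.toFinset
    · rw [Finset.insert_eq_self.mpr heL]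
      have := edgeLen_nonneg e
      linarith
    · rw [weight, Finset.sum_insert heL, ← weight]
      linarith

lemma path_reach (Q : Finset Pt) :
    ∀ (l : List Pt) (hl : l ≠ []) (_ : ∀ x ∈ l, x ∈ Q) (_ : l.Nodup)
      (x : Pt) (hx : x ∈ l) (hxQ : x ∈ (↑Q : Set Pt)) (hhQ : l.head hl ∈ (↑Q : Set Pt)),
      ((graphOf (edgesOfList l).toFinset).induce (↑Q : Set Pt)).Reachable
        ⟨x, hxQ⟩ ⟨l.head hl, hhQ⟩ := by
  intro l
  match l with
  | [] => intro hl; exact absurd rfl hl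
  | [a] =>
    intro hl hsub hnd x hx hxQ hhQ
    rw [List.mem_singleton] at hx
    subst hx
    exact SimpleGraph.Reachable.refl _
  | a :: b :: t =>
    intro hl hsub hnd x hx hxQ hhQ
    have hbQ : b ∈ Q := hsub b (by simp)
    have hbQ' : b ∈ (↑Q : Set Pt) := Finset.mem_coe.mpr hbQ
    have hab : a ≠ b := by
      intro h
      rw [List.nodup_cons] at hnd
      exact hnd.1 (h ▸ List.mem_cons_self (a := b) (l := t))
    have hadj : ((graphOf (edgesOfList (a :: b :: t)).toFinset).induce (↑Q : Set Pt)).Adj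
        ⟨a, hhQ⟩ ⟨b, hbQ'⟩ := by
      rw [induce_graphOf_adj]
      exact ⟨hab, by rw [edgesOfList]; simp⟩
    rcases List.mem_cons.mp hx with rfl | hx'
    · exact SimpleGraph.Reachable.refl _
    · have ih := path_reach Q (b :: t) (by simp)
        (fun y hy => hsub y (List.mem_cons_of_mem _ hy)) (List.nodup_cons.mp hnd).2
        x hx' hxQ hbQ'
      have hmono : ∀ c d : (↑Q : Set Pt),
          ((graphOf (edgesOfList (b :: t)).toFinset).induce (↑Q : Set Pt)).Adj c d →
          ((graphOf (edgesOfList (a :: b :: t)).toFinset).induce (↑Q : Set Pt)).Reachable c d := by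
        intro c d hcd
        rw [induce_graphOf_adj] at hcd
        apply SimpleGraph.Adj.reachable
        rw [induce_graphOf_adj]
        refine ⟨hcd.1, ?_⟩
        rw [List.mem_toFinset] at hcd ⊢
        rw [edgesOfList]
        exact List.mem_cons_of_mem _ hcd.2
      exact (reach_mono hmono ih).trans hadj.symm.reachable

lemma path_connected (Q : Finset Pt) (l : List Pt) (hl : l ≠ [])
    (hiff : ∀ x, x ∈ Q ↔ x ∈ l) (hnd : l.Nodup) :
    ((graphOf (edgesOfList l).toFinset).induce (↑Q : Set Pt)).Connected := by
  have hsub : ∀ x ∈ l, x ∈ Q := fun x hx => (hiff x).mpr hx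
  have hhQ : l.head hl ∈ Q := hsub _ (List.head_mem hl)
  have hhQ' : l.head hl ∈ (↑Q : Set Pt) := Finset.mem_coe.mpr hhQ
  have hne : Nonempty (↑Q : Set Pt) := ⟨⟨l.head hl, hhQ'⟩⟩
  refine (SimpleGraph.connected_iff _).mpr ⟨fun a b => ?_, hne⟩
  have ha := path_reach Q l hl hsub hnd a ((hiff a).mp (Finset.mem_coe.mp a.2)) a.2 hhQ'
  have hb := path_reach Q l hl hsub hnd b ((hiff b).mp (Finset.mem_coe.mp b.2)) b.2 hhQ'
  exact ha.trans hb.symm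

lemma mst_le_of_tour (P Q : Finset Pt) (hPQ : P ⊆ Q) (hPne : P.Nonempty)
    (l : List Pt) (hmem : ∀ x, x ∈ l ↔ x ∈ Q) : mstLen P ≤ cost l := by
  classical
  set l' := l.dedup.filter (fun x => decide (x ∈ P)) with hl'def
  have hsubl : l'.Sublist l := by
    rw [hl'def]; exact (List.filter_sublist (l := l.dedup)).trans l.dedup_sublist
  have hnd : l'.Nodup := l.nodup_dedup.filter _
  have hmem' : ∀ x, x ∈ P ↔ x ∈ l' := by
    intro x
    rw [hl'def, List.mem_filter, List.mem_dedup, decide_eq_true_iff]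
    constructor
    · intro hx; exact ⟨(hmem x).mpr (hPQ hx), hx⟩
    · intro hx; exact hx.2
  have hl'ne : l' ≠ [] := by
    obtain ⟨p, hp⟩ := hPne
    exact List.ne_nil_of_mem ((hmem' p).mp hp)
  have hconn := path_connected P l' hl'ne (fun x => hmem' x) hnd
  obtain ⟨T, hT, hwT⟩ := exists_spanning_tree P _ hconn
  calc mstLen P ≤ weight T := mstLen_le hT
    _ ≤ weight (edgesOfList l').toFinset := hwT
    _ ≤ ((edgesOfList l').map edgeLen).sum := weight_toFinset_le _
    _ = cost l' := (cost_eq_sum_edges l').symm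
    _ ≤ cost l := cost_sublist hsubl

lemma mst_le_two_mst {P Q : Finset Pt} (hPQ : P ⊆ Q) (hPne : P.Nonempty) :
    mstLen P ≤ 2 * mstLen Q := by
  have hQne : Q.Nonempty := hPne.mono hPQ
  have hub : ∀ w ∈ weight '' {T | IsSpanningTreeOn Q T}, mstLen P / 2 ≤ w := by
    rintro w ⟨T', hT', rfl⟩
    have hconn : ((graphOf T').induce (↑Q : Set Pt)).Connected := hT'.2.2.isConnected
    obtain ⟨a, ha⟩ := hQne
    obtain ⟨l, _, _, hlm, hlc⟩ := tour_exists T'.card T' le_rfl Q hT'.2.1 hconn a ha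
    have := mst_le_of_tour P Q hPQ hPne l hlm
    linarith
  have hSne : (weight '' {T | IsSpanningTreeOn Q T}).Nonempty := by
    obtain ⟨T, hT⟩ := exists_spanning_tree_of_nonempty Q hQne
    exact ⟨weight T, T, hT, rfl⟩
  have h2 : mstLen P / 2 ≤ mstLen Q := le_csInf hSne hub
  linarith

lemma mst_le_two_smt (P : Finset Pt) (hPne : P.Nonempty) : mstLen P ≤ 2 * smtLen P := by
  have hub : ∀ m ∈ {m : ℝ | ∃ Q' : Finset Pt, P ⊆ Q' ∧ m = mstLen Q'}, mstLen P / 2 ≤ m := by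
    rintro m ⟨Q', hPQ', rfl⟩
    have := mst_le_two_mst hPQ' hPne
    linarith
  have hSne : {m : ℝ | ∃ Q' : Finset Pt, P ⊆ Q' ∧ m = mstLen Q'}.Nonempty :=
    ⟨mstLen P, P, subset_rfl, rfl⟩
  have h2 : mstLen P / 2 ≤ smtLen P := le_csInf hSne hub
  linarith

/-- Key connectivity surgery: replacing the purple edges of `E` by `TP` keeps
the induced graph on `X ∪ P` connected, provided `TP` spans `P`. -/
lemma surgery_connected (X P : Finset Pt) (E TP E'' : Finset (Sym2 Pt))
    (hTPconn : ((graphOf TP).induce (↑P : Set Pt)).Connected)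
    (hsub : ∀ e, e ∈ E → e ∈ E'' ∨ (∀ x ∈ e, x ∈ P))
    (hTPsub : TP ⊆ E'')
    (hconn : ((graphOf E).induce (↑(X ∪ P) : Set Pt)).Connected) :
    ((graphOf E'').induce (↑(X ∪ P) : Set Pt)).Connected := by
  refine connected_transfer ?_ hconn
  intro c d hcd
  rw [induce_graphOf_adj] at hcd
  rcases hsub _ hcd.2 with hmem | hP
  · exact SimpleGraph.Adj.reachable (by rw [induce_graphOf_adj]; exact ⟨hcd.1, hmem⟩)
  · have hcP : (c : Pt) ∈ (↑P : Set Pt) :=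
      Finset.mem_coe.mpr (hP _ (Sym2.mem_mk_left _ _))
    have hdP : (d : Pt) ∈ (↑P : Set Pt) :=
      Finset.mem_coe.mpr (hP _ (Sym2.mem_mk_right _ _))
    have h1 : ((graphOf TP).induce (↑P : Set Pt)).Reachable ⟨c, hcP⟩ ⟨d, hdP⟩ :=
      hTPconn.preconnected _ _
    have h2 : ((graphOf E'').induce (↑P : Set Pt)).Reachable ⟨c, hcP⟩ ⟨d, hdP⟩ := by
      refine reach_mono ?_ h1
      intro x y hxy
      rw [induce_graphOf_adj] at hxy
      exact SimpleGraph.Adj.reachable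
        (by rw [induce_graphOf_adj]; exact ⟨hxy.1, hTPsub hxy.2⟩)
    have hle : (↑P : Set Pt) ≤ (↑(X ∪ P) : Set Pt) := by
      intro z hz
      exact Finset.mem_coe.mpr (Finset.mem_union_right _ (Finset.mem_coe.mp hz))
    have h3 := h2.map (SimpleGraph.induceHomOfLE (G := graphOf E'') hle).toHom
    have hc : (SimpleGraph.induceHomOfLE (G := graphOf E'') hle).toHom ⟨(c : Pt), hcP⟩ = c :=
      Subtype.ext rfl
    have hd : (SimpleGraph.induceHomOfLE (G := graphOf E'') hle).toHom ⟨(d : Pt), hdP⟩ = d :=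
      Subtype.ext rfl
    rwa [hc, hd] at h3


/-- let `ρ ≥ 1` be an upper bound on the Steiner ratio in the plane.
If `G'` is an RBP spanning graph of minimum weight among those whose set of purple
edges is exactly the edge set of a Euclidean MST `T_P` of `P`, then the weight of
`G'` is at most `(ρ/2 + 1)` times the weight of a minimum RBP spanning graph. -/
theorem algorithm_A_approximation (ρ : ℝ) (hρ1 : 1 ≤ ρ)
    (hρ : ∀ Q : Finset Pt, Q.Nonempty → mstLen Q ≤ ρ * smtLen Q)
    (R B P : Finset Pt)
    (hRB : Disjoint R B) (hRP : Disjoint R P) (hBP : Disjoint B P)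
    (hPne : P.Nonempty)
    (TP : Finset (Sym2 Pt)) (hTP : IsEMST P TP)
    (E' : Finset (Sym2 Pt))
    (hE'rbp : IsRBP R B P E')
    (hE'purple : E'.filter (fun e => ∀ x ∈ e, x ∈ P) = TP)
    (hE'min : ∀ E'' : Finset (Sym2 Pt), IsRBP R B P E'' →
      E''.filter (fun e => ∀ x ∈ e, x ∈ P) = TP → weight E' ≤ weight E'') :
    ∀ E : Finset (Sym2 Pt), IsMinRBP R B P E →
      weight E' ≤ (ρ / 2 + 1) * weight E := by
  intro E hE
  obtain ⟨⟨hEnd, hEmem, hERP, hEBP⟩, _⟩ := hE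
  obtain ⟨hTPst, hTPmin⟩ := hTP
  obtain ⟨hTPnd, hTPmem, hTPtree⟩ := hTPst
  classical
  set Pu := E.filter (fun e => ∀ x ∈ e, x ∈ P) with hPudef
  set E'' := (E \ Pu) ∪ TP with hE''def
  have hPuE : Pu ⊆ E := Finset.filter_subset _ _
  have hTPE'' : TP ⊆ E'' := Finset.subset_union_right
  -- membership facts for E''
  have hE''cases : ∀ e ∈ E'', e ∈ E ∧ e ∉ Pu ∨ e ∈ TP := by
    intro e he
    rcases Finset.mem_union.mp he with h | h
    · exact Or.inl (Finset.mem_sdiff.mp h)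
    · exact Or.inr h
  -- (1) E'' is RBP
  have hE''rbp : IsRBP R B P E'' := by
    refine ⟨?_, ?_, ?_, ?_⟩
    · intro e he
      rcases hE''cases e he with ⟨h, _⟩ | h
      · exact hEnd e h
      · exact hTPnd e h
    · intro e he x hx
      rcases hE''cases e he with ⟨h, _⟩ | h
      · exact hEmem e h x hx
      · exact Finset.mem_union_right _ (hTPmem e h x hx)
    · refine surgery_connected R P E TP E'' hTPtree.isConnected ?_ hTPE'' hERP
      intro e he
      by_cases hp : ∀ x ∈ e, x ∈ P
      · exact Or.inr hp
      · exact Or.inl (Finset.mem_union_left _ (Finset.mem_sdiff.mpr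
          ⟨he, fun hmem => hp (Finset.mem_filter.mp hmem).2⟩))
    · refine surgery_connected B P E TP E'' hTPtree.isConnected ?_ hTPE'' hEBP
      intro e he
      by_cases hp : ∀ x ∈ e, x ∈ P
      · exact Or.inr hp
      · exact Or.inl (Finset.mem_union_left _ (Finset.mem_sdiff.mpr
          ⟨he, fun hmem => hp (Finset.mem_filter.mp hmem).2⟩))
  -- (2) purple edges of E'' are exactly TP
  have hE''purple : E''.filter (fun e => ∀ x ∈ e, x ∈ P) = TP := by
    ext e
    rw [Finset.mem_filter]
    constructor
    · rintro ⟨he, hp⟩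
      rcases hE''cases e he with ⟨hEe, hnPu⟩ | h
      · exact absurd (Finset.mem_filter.mpr ⟨hEe, hp⟩) hnPu
      · exact h
    · intro h
      exact ⟨hTPE'' h, hTPmem e h⟩
  -- (3) weight accounting
  have hdisjPu : Disjoint (E \ Pu) TP := by
    rw [Finset.disjoint_left]
    intro e he hTPe
    obtain ⟨heE, hePu⟩ := Finset.mem_sdiff.mp he
    exact hePu (by rw [hPudef]; exact Finset.mem_filter.mpr ⟨heE, hTPmem e hTPe⟩)
  have hwE'' : weight E'' = weight E - weight Pu + weight TP := by
    have hsd : weight (E \ Pu) + weight Pu = weight E := Finset.sum_sdiff hPuE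
    rw [hE''def, weight, Finset.sum_union hdisjPu, ← weight, ← weight]
    linarith
  -- (4) weight TP = mstLen P
  have hTPeq : weight TP = mstLen P := by
    refine le_antisymm ?_ (mstLen_le ⟨hTPnd, hTPmem, hTPtree⟩)
    refine le_csInf ⟨weight TP, TP, ⟨hTPnd, hTPmem, hTPtree⟩, rfl⟩ ?_
    rintro w ⟨T', hT', rfl⟩
    exact hTPmin T' hT'
  -- (6) Steiner bounds from the two induced connected graphs
  have hsmtRP : smtLen P ≤ weight (E.filter (fun e => ∀ x ∈ e, x ∈ R ∪ P)) := by
    have heq := induce_filter_eq E (R ∪ P) (fun e => ∀ x ∈ e, x ∈ R ∪ P) (by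
      intro x y hx hy hne he z hz
      rcases mem_of_mem_sym2 hz with rfl | rfl
      · exact hx
      · exact hy)
    have hconn' : ((graphOf (E.filter (fun e => ∀ x ∈ e, x ∈ R ∪ P))).induce
        (↑(R ∪ P) : Set Pt)).Connected := by rw [heq]; exact hERP
    obtain ⟨T, hT, hwT⟩ := exists_spanning_tree (R ∪ P) _ hconn'
    exact (smtLen_le (Finset.subset_union_right)).trans ((mstLen_le hT).trans hwT)
  have hsmtBP : smtLen P ≤ weight (E.filter (fun e => ∀ x ∈ e, x ∈ B ∪ P)) := by
    have heq := induce_filter_eq E (B ∪ P) (fun e => ∀ x ∈ e, x ∈ B ∪ P) (by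
      intro x y hx hy hne he z hz
      rcases mem_of_mem_sym2 hz with rfl | rfl
      · exact hx
      · exact hy)
    have hconn' : ((graphOf (E.filter (fun e => ∀ x ∈ e, x ∈ B ∪ P))).induce
        (↑(B ∪ P) : Set Pt)).Connected := by rw [heq]; exact hEBP
    obtain ⟨T, hT, hwT⟩ := exists_spanning_tree (B ∪ P) _ hconn'
    exact (smtLen_le (Finset.subset_union_right)).trans ((mstLen_le hT).trans hwT)
  -- (7) the two filters overlap exactly in Pu
  have hinter : (E.filter (fun e => ∀ x ∈ e, x ∈ R ∪ P)) ∩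
      (E.filter (fun e => ∀ x ∈ e, x ∈ B ∪ P)) = Pu := by
    ext e
    rw [Finset.mem_inter, Finset.mem_filter, Finset.mem_filter, hPudef, Finset.mem_filter]
    constructor
    · rintro ⟨⟨heE, h1⟩, ⟨_, h2⟩⟩
      refine ⟨heE, fun x hx => ?_⟩
      rcases Finset.mem_union.mp (h1 x hx) with hR | hP
      · rcases Finset.mem_union.mp (h2 x hx) with hB | hP
        · exact absurd hB (Finset.disjoint_left.mp hRB hR)
        · exact absurd hP (Finset.disjoint_left.mp hRP hR)
      · exact hP
    · rintro ⟨heE, h⟩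
      exact ⟨⟨heE, fun x hx => Finset.mem_union_right _ (h x hx)⟩,
             ⟨heE, fun x hx => Finset.mem_union_right _ (h x hx)⟩⟩
  have hsum : weight (E.filter (fun e => ∀ x ∈ e, x ∈ R ∪ P)) +
      weight (E.filter (fun e => ∀ x ∈ e, x ∈ B ∪ P)) ≤ weight E + weight Pu := by
    have h1 := Finset.sum_union_inter (f := edgeLen)
      (s₁ := E.filter (fun e => ∀ x ∈ e, x ∈ R ∪ P))
      (s₂ := E.filter (fun e => ∀ x ∈ e, x ∈ B ∪ P))
    rw [hinter] at h1
    have h2 : weight ((E.filter (fun e => ∀ x ∈ e, x ∈ R ∪ P)) ∪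
        (E.filter (fun e => ∀ x ∈ e, x ∈ B ∪ P))) ≤ weight E :=
      weight_mono (Finset.union_subset (Finset.filter_subset _ _) (Finset.filter_subset _ _))
    have h1' : weight ((E.filter (fun e => ∀ x ∈ e, x ∈ R ∪ P)) ∪
        (E.filter (fun e => ∀ x ∈ e, x ∈ B ∪ P))) + weight Pu =
        weight (E.filter (fun e => ∀ x ∈ e, x ∈ R ∪ P)) +
        weight (E.filter (fun e => ∀ x ∈ e, x ∈ B ∪ P)) := h1
    linarith
  -- main chain
  have hmain : weight E' ≤ weight E - weight Pu + mstLen P := by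
    rw [← hTPeq, ← hwE'']
    exact hE'min E'' hE''rbp hE''purple
  have h2smt : 2 * smtLen P ≤ weight E + weight Pu := by linarith
  have hWp : 0 ≤ weight Pu := weight_nonneg Pu
  have hW : 0 ≤ weight E := weight_nonneg E
  have hsmt : 0 ≤ smtLen P := smtLen_nonneg P
  rcases le_or_gt ρ 2 with hρ2 | hρ2
  · have hmst := hρ P hPne
    have hmul : ρ * smtLen P ≤ ρ * ((weight E + weight Pu) / 2) :=
      mul_le_mul_of_nonneg_left (by linarith) (by linarith)
    nlinarith [mul_nonneg (sub_nonneg.mpr hρ2) hWp]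
  · have hmst := mst_le_two_smt P hPne
    nlinarith [mul_nonneg (sub_nonneg.mpr hρ2.le) hW]
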